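/- Let X, Y be real Hilbert spaces, T : X → Y bounded linear with operator norm ‖T‖, f ∈ Y, u* ∈ X with T u* = f, and suppose ‖Tu‖²_Y ≥ α |||u|||² for a seminorm |||·||| and α > 0. Let F ⊆ X be any nonempty subset and let v ∈ F. Define E(u) = ½‖Tu − f‖²_Y and δ = E(v) − inf_{w ∈ F} E(w). Then |||v − u*|||² ≤ (2δ)/α + (‖T‖²/α) · inf_{w ∈ F} ‖w − u*‖²_X. -/

import Mathlib

theorem cea_lemma_pinns
    {X Y : Type*} [NormedAddCommGroup X] [InnerProductSpace ℝ X] [CompleteSpace X]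
    [NormedAddCommGroup Y] [InnerProductSpace ℝ Y] [CompleteSpace Y]
    (T : X →L[ℝ] Y) (f : Y) (ustar : X) (hsol : T ustar = f)
    (N : Seminorm ℝ X) (α : ℝ) (hα : 0 < α)
    (hcoerc : ∀ u : X, α * (N u)^2 ≤ ‖T u‖^2)
    (F : Set X) (hF : F.Nonempty) (v : X) (hv : v ∈ F)
    (E : X → ℝ) (hE : ∀ u, E u = (1/2 : ℝ) * ‖T u - f‖^2)
    (δ : ℝ) (hδ : δ = E v - ⨅ w : F, E w) :
    (N (v - ustar))^2
      ≤ 2 * δ / α + (‖T‖^2 / α) * ⨅ w : F, ‖(w : X) - ustar‖^2 := by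
  haveI : Nonempty F := hF.to_subtype
  have hEnn : ∀ u, 0 ≤ E u := by
    intro u; rw [hE]; positivity
  have hbdd : BddBelow (Set.range fun w : F => E w) :=
    ⟨0, by rintro x ⟨w, rfl⟩; exact hEnn w⟩
  -- pointwise bound E w ≤ (1/2)‖T‖² ‖w - u*‖²
  have hpt : ∀ w : F, E (w : X) ≤ (1/2 * ‖T‖^2) * ‖(w : X) - ustar‖^2 := by
    intro w
    rw [hE]
    have h1 : ‖T (w : X) - f‖ = ‖T ((w : X) - ustar)‖ := by
      rw [map_sub, hsol]
    have h2 : ‖T ((w : X) - ustar)‖ ≤ ‖T‖ * ‖(w : X) - ustar‖ := T.le_opNorm _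
    have h3 : ‖T (w : X) - f‖^2 ≤ (‖T‖ * ‖(w : X) - ustar‖)^2 := by
      rw [h1]; exact pow_le_pow_left₀ (norm_nonneg _) h2 2
    nlinarith
  have hinf_le : (⨅ w : F, E w) ≤ (1/2 * ‖T‖^2) * ⨅ w : F, ‖(w : X) - ustar‖^2 := by
    rw [Real.mul_iInf_of_nonneg (by positivity)]
    exact ciInf_mono hbdd hpt
  have hinfle : (⨅ w : F, E w) ≤ E v := ciInf_le hbdd ⟨v, hv⟩
  have hmain : α * (N (v - ustar))^2 ≤ 2 * δ + ‖T‖^2 * ⨅ w : F, ‖(w : X) - ustar‖^2 := by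
    have h1 : α * (N (v - ustar))^2 ≤ ‖T (v - ustar)‖^2 := hcoerc _
    have h2 : ‖T (v - ustar)‖^2 = 2 * E v := by
      rw [hE, map_sub, hsol]; ring
    have h3 : E v = δ + ⨅ w : F, E w := by rw [hδ]; ring
    nlinarith [hinf_le]
  rw [div_mul_eq_mul_div, ← add_div, le_div_iff₀ hα]
  linarith
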